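/- arXiv:math/0404138 — 4 statements merged into one kernel-verified Lean document; each statement's English description precedes it below -/
import Mathlib

section
/- Let m ≥ 0 and let (m_i)_{0≤i≤d-1} and (m'_i)_{0≤i≤d'-1} be two nondecreasing finite sequences of natural numbers. If for every integer l ≥ 0 one has Σ_{i=0}^{d-1} C(m+l-m_i, m) = Σ_{i=0}^{d'-1} C(m+l-m'_i, m) (where the binomial C(a,m) is taken to be 0 when a < m), then d = d' and m_i = m'_i for all 0 ≤ i ≤ d-1. -/
/-- The basic term. -/
def chT (m v l : ℕ) : ℕ := if v ≤ m + l then Nat.choose (m + l - v) m else 0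

lemma chT_self (m v : ℕ) : chT m v v = 1 := by
  simp [chT, Nat.le_add_left]

lemma chT_zero_of_lt (m v l : ℕ) (h : l < v) : chT m v l = 0 := by
  unfold chT
  split
  · exact Nat.choose_eq_zero_of_lt (by omega)
  · rfl

lemma aux_le {m dd dd' : ℕ} (ms : Fin (dd + 1) → ℕ) (ms' : Fin (dd' + 1) → ℕ)
    (hms' : Monotone ms')
    (h : (∑ i : Fin (dd + 1), chT m (ms i) (ms 0)) =
         (∑ i : Fin (dd' + 1), chT m (ms' i) (ms 0))) : ms' 0 ≤ ms 0 := by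
  by_contra hc
  push_neg at hc
  have hr : (∑ i : Fin (dd' + 1), chT m (ms' i) (ms 0)) = 0 := by
    apply Finset.sum_eq_zero
    intro i _
    exact chT_zero_of_lt _ _ _ (lt_of_lt_of_le hc (hms' (Fin.zero_le i)))
  have hl : 1 ≤ ∑ i : Fin (dd + 1), chT m (ms i) (ms 0) := by
    calc 1 = chT m (ms 0) (ms 0) := (chT_self m (ms 0)).symm
    _ ≤ _ := Finset.single_le_sum (f := fun i => chT m (ms i) (ms 0))
        (fun _ _ => Nat.zero_le _) (Finset.mem_univ 0)
  omega

theorem key (m : ℕ) : ∀ d d' : ℕ, ∀ ms : Fin d → ℕ, ∀ ms' : Fin d' → ℕ,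
    Monotone ms → Monotone ms' →
    (∀ l : ℕ, (∑ i : Fin d, chT m (ms i) l) = (∑ i : Fin d', chT m (ms' i) l)) →
    ∃ hd : d = d', ∀ i : Fin d, ms i = ms' (Fin.cast hd i) := by
  intro d
  induction d with
  | zero =>
    intro d' ms ms' _ hms' h
    match d' with
    | 0 => exact ⟨rfl, fun i => i.elim0⟩
    | dd' + 1 =>
      exfalso
      have h0 := h (ms' 0)
      simp only [Finset.univ_eq_empty, Finset.sum_empty] at h0
      have hl : 1 ≤ ∑ i : Fin (dd' + 1), chT m (ms' i) (ms' 0) := by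
        calc 1 = chT m (ms' 0) (ms' 0) := (chT_self m (ms' 0)).symm
        _ ≤ _ := Finset.single_le_sum (f := fun i => chT m (ms' i) (ms' 0))
            (fun _ _ => Nat.zero_le _) (Finset.mem_univ 0)
      omega
  | succ dd ih =>
    intro d' ms ms' hms hms' h
    match d' with
    | 0 =>
      exfalso
      have h0 := h (ms 0)
      simp only [Finset.univ_eq_empty, Finset.sum_empty] at h0
      have hl : 1 ≤ ∑ i : Fin (dd + 1), chT m (ms i) (ms 0) := by
        calc 1 = chT m (ms 0) (ms 0) := (chT_self m (ms 0)).symm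
        _ ≤ _ := Finset.single_le_sum (f := fun i => chT m (ms i) (ms 0))
            (fun _ _ => Nat.zero_le _) (Finset.mem_univ 0)
      omega
    | dd' + 1 =>
      have h1 : ms' 0 ≤ ms 0 := aux_le ms ms' hms' (h (ms 0))
      have h2 : ms 0 ≤ ms' 0 := aux_le ms' ms hms (h (ms' 0)).symm
      have h0 : ms 0 = ms' 0 := le_antisymm h2 h1
      have htail : ∀ l : ℕ,
          (∑ i : Fin dd, chT m (ms i.succ) l) = (∑ i : Fin dd', chT m (ms' i.succ) l) := by
        intro l
        have := h l
        rw [Fin.sum_univ_succ, Fin.sum_univ_succ, h0] at this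
        omega
      obtain ⟨hdd, hptw⟩ := ih dd' (fun i => ms i.succ) (fun i => ms' i.succ)
        (fun i j hij => hms (by simpa using hij))
        (fun i j hij => hms' (by simpa using hij)) htail
      subst hdd
      refine ⟨rfl, fun i => ?_⟩
      induction i using Fin.cases with
      | zero => simpa using h0
      | succ j => simpa using hptw j

/-- Uniqueness of the characteristic sequence: if two nondecreasing sequences
give the same Hilbert function `l ↦ Σ_i C(m+l-m_i, m)` (binomial taken as `0`
when the top argument is negative), they coincide. -/
theorem stmt_0 (m d d' : ℕ) (ms : Fin d → ℕ) (ms' : Fin d' → ℕ)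
    (hms : Monotone ms) (hms' : Monotone ms')
    (h : ∀ l : ℕ,
      (∑ i : Fin d, if ms i ≤ m + l then Nat.choose (m + l - ms i) m else 0) =
      (∑ i : Fin d', if ms' i ≤ m + l then Nat.choose (m + l - ms' i) m else 0)) :
    ∃ hd : d = d', ∀ i : Fin d, ms i = ms' (Fin.cast hd i) :=
  key m d d' ms ms' hms hms' h
end

section
/- Let d ≥ 1, r ≥ 1, and let (m_i)_{0≤i≤d-1} be a nondecreasing sequence of natural numbers with m_0 = 0, m_{i+1} ≤ m_i + 1 for all i, and m_{i+3} ≤ m_i + 2 for all i ≤ d − r (with i+3 ≤ d−1). Then m_{d-1} ≤ r + ⌊(2d−2r−1)/3⌋. -/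
/-- If `(m_i)_{0 ≤ i ≤ d-1}` is nondecreasing with `m_0 = 0`,
`m_{i+1} ≤ m_i + 1` for all `i`, and `m_{i+3} ≤ m_i + 2` for all `i ≤ d - r`,
then `m_{d-1} ≤ r + ⌊(2d-2r-1)/3⌋`. -/
theorem stmt_6 (d r : ℕ) (hd : 1 ≤ d) (hr : 1 ≤ r) (m : ℕ → ℕ)
    (hm0 : m 0 = 0)
    (hmono : ∀ i, i + 1 ≤ d - 1 → m i ≤ m (i + 1))
    (hstep : ∀ i, i + 1 ≤ d - 1 → m (i + 1) ≤ m i + 1)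
    (hstep3 : ∀ i, i ≤ d - r → i + 3 ≤ d - 1 → m (i + 3) ≤ m i + 2) :
    m (d - 1) ≤ r + (2 * d - 2 * r - 1) / 3 := by
  have hchain : ∀ a k, a + k ≤ d - 1 → m (a + k) ≤ m a + k := by
    intro a k
    induction k with
    | zero => intro _; simp
    | succ n ih =>
      intro h
      have h1 : a + n + 1 ≤ d - 1 := by omega
      have := hstep (a + n) h1
      have := ih (by omega)
      calc m (a + (n + 1)) = m (a + n + 1) := by ring_nf
        _ ≤ m (a + n) + 1 := hstep (a + n) h1
        _ ≤ m a + (n + 1) := by omega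
  by_cases hdr : d ≤ r
  · have := hchain 0 (d - 1) (by omega)
    simp only [Nat.zero_add, hm0] at this
    omega
  · set s := d - r with hs
    set q := s / 3 with hq
    have h3q : 3 * q ≤ s := by omega
    have htr : ∀ j, j ≤ q → m (3 * j) ≤ 2 * j := by
      intro j
      induction j with
      | zero => intro _; simpa using hm0.le
      | succ n ih =>
        intro h
        have h1 : 3 * n ≤ d - r := by omega
        have h2 : 3 * n + 3 ≤ d - 1 := by omega
        have := hstep3 (3 * n) h1 h2
        have := ih (by omega)
        calc m (3 * (n + 1)) = m (3 * n + 3) := by ring_nf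
          _ ≤ m (3 * n) + 2 := hstep3 (3 * n) h1 h2
          _ ≤ 2 * (n + 1) := by omega
    have hA := htr q le_rfl
    have hB := hchain (3 * q) (d - 1 - 3 * q) (by omega)
    have : 3 * q + (d - 1 - 3 * q) = d - 1 := by omega
    rw [this] at hB
    omega
end

section
/- Let d ≥ 1 and let (n_i)_{0≤i≤d-1} and (n'_i)_{0≤i≤d-1} be nondecreasing sequences of natural numbers such that for every integer l ≥ 0, Σ_{i=0}^{d-1} max(l+1−n_i,0) ≥ Σ_{i=0}^{d-1} max(l+1−n'_i,0), and such that Σ_i n_i = Σ_i n'_i. Suppose further that n_{i+1} ≤ n_i + 1 for all i, and that n' has exactly one index i_0 with n'_{i_0} = n'_{i_0+1} while n'_{i+1} = n'_i + 1 for all other i. If equality Σ_i max(l+1−n_i,0) = Σ_i max(l+1−n'_i,0) holds for all l, then n_i = n'_i for all i. -/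
private lemma count_range_le (a N : ℕ) :
    ((Finset.range N).filter (fun m => a ≤ m)).card = N - a := by
  have h : (Finset.range N).filter (fun m => a ≤ m) = Finset.Ico a N := by
    ext m
    simp only [Finset.mem_filter, Finset.mem_range, Finset.mem_Ico]
    omega
  rw [h, Nat.card_Ico]

private lemma sum_trunc_eq (d : ℕ) (f : ℕ → ℕ) (l : ℕ) :
    (∑ i ∈ Finset.range d, (l + 1 - f i)) =
      ∑ m ∈ Finset.range (l + 1),
        ((Finset.range d).filter (fun j => f j ≤ m)).card := by
  have h1 : ∀ i, l + 1 - f i =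
      ∑ m ∈ Finset.range (l + 1), (if f i ≤ m then 1 else 0) := by
    intro i
    rw [← Finset.card_filter, count_range_le]
  calc (∑ i ∈ Finset.range d, (l + 1 - f i))
      = ∑ i ∈ Finset.range d, ∑ m ∈ Finset.range (l + 1),
          (if f i ≤ m then 1 else 0) := by
        exact Finset.sum_congr rfl fun i _ => h1 i
    _ = ∑ m ∈ Finset.range (l + 1), ∑ i ∈ Finset.range d,
          (if f i ≤ m then 1 else 0) := Finset.sum_comm
    _ = ∑ m ∈ Finset.range (l + 1),
          ((Finset.range d).filter (fun j => f j ≤ m)).card := by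
        exact Finset.sum_congr rfl fun m _ => (Finset.card_filter _ _).symm

private lemma mono_of_step {d : ℕ} {f : ℕ → ℕ}
    (hf : ∀ i, i + 1 < d → f i ≤ f (i + 1)) :
    ∀ i j, i ≤ j → j < d → f i ≤ f j := by
  intro i j hij hj
  induction j with
  | zero => simpa [Nat.le_zero.mp hij] using le_refl (f 0)
  | succ k ih =>
    rcases Nat.lt_or_ge i (k + 1) with h | h
    · exact le_trans (ih (by omega) (by omega)) (hf k hj)
    · have : i = k + 1 := by omega
      rw [this]
  
private lemma le_iff_card {d : ℕ} {f : ℕ → ℕ}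
    (hf : ∀ i, i + 1 < d → f i ≤ f (i + 1)) {i : ℕ} (hi : i < d) (l : ℕ) :
    f i ≤ l ↔ i + 1 ≤ ((Finset.range d).filter (fun j => f j ≤ l)).card := by
  constructor
  · intro h
    have hsub : Finset.range (i + 1) ⊆
        (Finset.range d).filter (fun j => f j ≤ l) := by
      intro j hj
      simp only [Finset.mem_range] at hj
      simp only [Finset.mem_filter, Finset.mem_range]
      exact ⟨by omega, le_trans (mono_of_step hf j i (by omega) hi) h⟩
    have := Finset.card_le_card hsub
    simpa using this
  · intro h
    by_contra hc
    push_neg at hc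
    have hsub : (Finset.range d).filter (fun j => f j ≤ l) ⊆
        Finset.range i := by
      intro j hj
      simp only [Finset.mem_filter, Finset.mem_range] at hj
      simp only [Finset.mem_range]
      by_contra hji
      push_neg at hji
      exact absurd (le_trans (mono_of_step hf i j hji hj.1) hj.2) (by omega)
    have := Finset.card_le_card hsub
    simp only [Finset.card_range] at this
    omega

/-- Equality case of the minimality proposition: if `n` and `n'` are
nondecreasing, `Σ_i (l+1-n_i)_+ ≥ Σ_i (l+1-n'_i)_+` for all `l` with equal
total sums `Σ n = Σ n'`, `n` has steps at most `1`, `n'` has exactly one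
repetition and otherwise increases by exactly `1`, and equality
`Σ_i (l+1-n_i)_+ = Σ_i (l+1-n'_i)_+` holds for all `l`, then `n_i = n'_i`
for all `i < d`. -/
theorem stmt_13 (d : ℕ) (hd : 1 ≤ d) (n n' : ℕ → ℕ)
    (hmono : ∀ i, i + 1 < d → n i ≤ n (i + 1))
    (hmono' : ∀ i, i + 1 < d → n' i ≤ n' (i + 1))
    (hge : ∀ l : ℕ, (∑ i ∈ Finset.range d, (l + 1 - n' i)) ≤
      ∑ i ∈ Finset.range d, (l + 1 - n i))
    (hsum : ∑ i ∈ Finset.range d, n i = ∑ i ∈ Finset.range d, n' i)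
    (hstep : ∀ i, i + 1 < d → n (i + 1) ≤ n i + 1)
    (i₀ : ℕ) (hi₀ : i₀ + 1 < d) (hrep : n' i₀ = n' (i₀ + 1))
    (huniq : ∀ i, i + 1 < d → i ≠ i₀ → n' (i + 1) = n' i + 1)
    (heq : ∀ l : ℕ, (∑ i ∈ Finset.range d, (l + 1 - n i)) =
      ∑ i ∈ Finset.range d, (l + 1 - n' i)) :
    ∀ i, i < d → n i = n' i := by
  set c : ℕ → ℕ := fun m => ((Finset.range d).filter (fun j => n j ≤ m)).card
    with hc
  set c' : ℕ → ℕ := fun m => ((Finset.range d).filter (fun j => n' j ≤ m)).card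
    with hc'
  have hF : ∀ l, (∑ m ∈ Finset.range (l + 1), c m) =
      ∑ m ∈ Finset.range (l + 1), c' m := by
    intro l
    rw [← sum_trunc_eq d n l, ← sum_trunc_eq d n' l]
    exact heq l
  have hcc : ∀ m, c m = c' m := by
    intro m
    induction m with
    | zero =>
      have := hF 0
      simpa using this
    | succ k ih =>
      have h1 := hF (k + 1)
      have h2 := hF k
      rw [Finset.sum_range_succ, Finset.sum_range_succ (f := c')] at h1
      omega
  intro i hi
  have key : ∀ l, n i ≤ l ↔ n' i ≤ l := by
    intro l
    rw [le_iff_card hmono hi, le_iff_card hmono' hi]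
    have := hcc l
    simp only [hc, hc'] at this
    omega
  have h1 := (key (n i)).mp le_rfl
  have h2 := (key (n' i)).mpr le_rfl
  omega
end

section
/- Let d ≥ 1, s ≥ 1 with s ≤ d−2, and 0 ≤ r < d with α = sd − r. Define r(α) := s(s+3)/2 − r if r ≤ s+1, and r(α) := (s−1)(s+2)/2 if r ≥ s+1. Let (n'_i) be the sequence with n'_i = s+i for 0 ≤ i ≤ d−1−r and n'_i = s+i−1 for d−r ≤ i ≤ d−1, and define φ_Δ(l) := Σ_{i=0}^{d-1} (max(l+1−i,0) − max(l+1−n'_i,0)). Then α − φ_Δ(d−3) = r(α). -/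
lemma gauss_int (n : ℕ) : 2 * ∑ i ∈ Finset.range n, (i : ℤ) = n * (n - 1) := by
  induction n with
  | zero => simp
  | succ k ih =>
    rw [Finset.sum_range_succ]
    push_cast
    push_cast at ih
    ring_nf
    ring_nf at ih
    linarith

lemma sum_max_tri (a : ℤ) (d : ℕ) (h0 : 0 ≤ a) (h : a ≤ d) :
    2 * ∑ i ∈ Finset.range d, max (a - i) 0 = a * (a + 1) := by
  obtain ⟨n, rfl⟩ : ∃ n : ℕ, a = n := ⟨a.toNat, (Int.toNat_of_nonneg h0).symm⟩
  have hnd : n ≤ d := by exact_mod_cast h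
  rw [← Finset.sum_subset (Finset.range_subset_range.2 hnd)
      (fun i _ hi => by
        have hni : n ≤ i := le_of_not_gt (fun hlt => hi (Finset.mem_range.2 hlt))
        apply max_eq_right
        omega)]
  have hc : ∀ i ∈ Finset.range n, max ((n : ℤ) - i) 0 = (n : ℤ) - i := by
    intro i hi
    have := Finset.mem_range.1 hi
    apply max_eq_left
    omega
  rw [Finset.sum_congr rfl hc, Finset.sum_sub_distrib, Finset.sum_const,
    Finset.card_range, nsmul_eq_mul]
  linear_combination -gauss_int n

lemma sum_lin (m : ℕ) (a : ℤ) :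
    2 * ∑ i ∈ Finset.range m, (a - i) = m * (2 * a - m + 1) := by
  rw [Finset.sum_sub_distrib, Finset.sum_const, Finset.card_range, nsmul_eq_mul]
  linear_combination -gauss_int m

/-- Ciliberto's maximal dimension: with `α = sd - r`, `s ≤ d-2`, `n'` the
sequence `s+i` (for `i < d-r`) / `s+i-1` (for `i ≥ d-r`), and
`φ_Δ(l) = Σ_{i<d} ((l+1-i)_+ - (l+1-n'_i)_+)`, one has
`α - φ_Δ(d-3) = r(α)`, where `r(α) = s(s+3)/2 - r` if `r ≤ s+1` and
`r(α) = (s-1)(s+2)/2` if `r ≥ s+1`. -/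
theorem stmt_18 (d s r : ℕ) (hd : 1 ≤ d) (hs : 1 ≤ s) (hsd : s ≤ d - 2)
    (hr : r < d) (α : ℤ) (hα : α = s * d - r)
    (n' : ℕ → ℕ) (hn' : ∀ i, n' i = if i < d - r then s + i else s + i - 1)
    (φ : ℕ → ℤ)
    (hφ : ∀ l : ℕ, φ l = ∑ i ∈ Finset.range d,
      (max ((l : ℤ) + 1 - i) 0 - max ((l : ℤ) + 1 - n' i) 0)) :
    ((α : ℚ) - (φ (d - 3) : ℚ)) =
      if r ≤ s + 1 then (s : ℚ) * ((s : ℚ) + 3) / 2 - r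
      else ((s : ℚ) - 1) * ((s : ℚ) + 2) / 2 := by
  have hd3 : 3 ≤ d := by omega
  have hc : ((d - 3 : ℕ) : ℤ) + 1 = (d : ℤ) - 2 := by omega
  have hsum : φ (d - 3) = (∑ i ∈ Finset.range d, max ((d : ℤ) - 2 - i) 0)
      - ∑ i ∈ Finset.range d, max ((d : ℤ) - 2 - n' i) 0 := by
    rw [hφ]
    simp only [hc]
    rw [Finset.sum_sub_distrib]
  have hS1 : 2 * ∑ i ∈ Finset.range d, max ((d : ℤ) - 2 - i) 0
      = ((d : ℤ) - 2) * ((d : ℤ) - 1) := by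
    rw [sum_max_tri ((d : ℤ) - 2) d (by omega) (by omega)]
    ring
  have hdd : d - r + r = d := by omega
  have hsplit : ∑ i ∈ Finset.range d, max ((d : ℤ) - 2 - n' i) 0
      = (∑ i ∈ Finset.range (d - r), max ((d : ℤ) - 2 - s - i) 0)
        + ∑ j ∈ Finset.range r, max (((r : ℤ) - 1 - s) - j) 0 := by
    conv_lhs => rw [← hdd]
    rw [Finset.sum_range_add]
    congr 1
    · apply Finset.sum_congr rfl
      intro i hi
      have hi' := Finset.mem_range.1 hi
      rw [hn' i, if_pos (by omega)]
      congr 1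
      push_cast
      omega
    · apply Finset.sum_congr rfl
      intro j hj
      rw [hn' (d - r + j), if_neg (by omega)]
      congr 1
      have h1 : s + (d - r + j) - 1 = s + (d - r) + j - 1 := by omega
      push_cast [h1]
      omega
  have hαQ : (α : ℚ) = (s : ℚ) * (d : ℚ) - (r : ℚ) := by exact_mod_cast hα
  by_cases hcase : r ≤ s + 1
  · have h1 : 2 * ∑ i ∈ Finset.range (d - r), max ((d : ℤ) - 2 - s - i) 0
        = ((d : ℤ) - 2 - s) * ((d : ℤ) - 1 - s) := by
      rw [sum_max_tri ((d : ℤ) - 2 - s) (d - r) (by omega) (by omega)]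
      ring
    have h2 : ∑ j ∈ Finset.range r, max (((r : ℤ) - 1 - s) - j) 0 = 0 := by
      apply Finset.sum_eq_zero
      intro j hj
      apply max_eq_right
      omega
    have hφ2 : (2 : ℤ) * φ (d - 3)
        = ((d : ℤ) - 2) * ((d : ℤ) - 1) - ((d : ℤ) - 2 - s) * ((d : ℤ) - 1 - s) := by
      rw [hsum, hsplit, h2]
      linarith [hS1, h1]
    have hφQ : (2 : ℚ) * (φ (d - 3) : ℚ)
        = ((d : ℚ) - 2) * ((d : ℚ) - 1) - ((d : ℚ) - 2 - s) * ((d : ℚ) - 1 - s) := by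
      exact_mod_cast hφ2
    rw [if_pos hcase]
    linear_combination hαQ - hφQ / 2
  · have hrs : s + 2 ≤ r := by omega
    have h1 : 2 * ∑ i ∈ Finset.range (d - r), max ((d : ℤ) - 2 - s - i) 0
        = ((d : ℤ) - r) * (2 * ((d : ℤ) - 2 - s) - ((d : ℤ) - r) + 1) := by
      have he : ∀ i ∈ Finset.range (d - r),
          max ((d : ℤ) - 2 - s - i) 0 = (d : ℤ) - 2 - s - i := by
        intro i hi
        have := Finset.mem_range.1 hi
        apply max_eq_left
        omega
      rw [Finset.sum_congr rfl he, sum_lin]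
      have hcast : ((d - r : ℕ) : ℤ) = (d : ℤ) - r := by omega
      rw [hcast]
    have h2 : 2 * ∑ j ∈ Finset.range r, max (((r : ℤ) - 1 - s) - j) 0
        = ((r : ℤ) - 1 - s) * ((r : ℤ) - s) := by
      rw [sum_max_tri ((r : ℤ) - 1 - s) r (by omega) (by omega)]
      ring
    have hφ2 : (2 : ℤ) * φ (d - 3)
        = ((d : ℤ) - 2) * ((d : ℤ) - 1)
          - (((d : ℤ) - r) * (2 * ((d : ℤ) - 2 - s) - ((d : ℤ) - r) + 1)
            + ((r : ℤ) - 1 - s) * ((r : ℤ) - s)) := by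
      rw [hsum, hsplit]
      linarith [hS1, h1, h2]
    have hφQ : (2 : ℚ) * (φ (d - 3) : ℚ)
        = ((d : ℚ) - 2) * ((d : ℚ) - 1)
          - (((d : ℚ) - r) * (2 * ((d : ℚ) - 2 - s) - ((d : ℚ) - r) + 1)
            + ((r : ℚ) - 1 - s) * ((r : ℚ) - s)) := by
      exact_mod_cast hφ2
    rw [if_neg hcase]
    linear_combination hαQ - hφQ / 2
end
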